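/- arXiv:2412.08898 — 5 statements merged into one kernel-verified Lean document; each statement's English description precedes it below -/
import Mathlib

section
/- Suppose H_d : ℝ⁴ → ℝ satisfies C·e₂²/2 ≤ H_d(e) for all e, and along a trajectory e(t) the value H_d(e(t)) is nonincreasing in t whenever x₂(t) = x₂* + e₂(t) > RP/x₂*. If the initial state satisfies √((2/C)H_d(e(0))) < x₂* - RP/x₂*, then for all t ≥ 0, √((2/C)H_d(e(t))) < x₂* - RP/x₂* (the sublevel set B₂ is forward invariant). -/
theorem stmt_5 (C R P x₂s : ℝ) (hC : 0 < C) (hR : 0 < R) (hP : 0 < P)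
    (hx₂s : 0 < x₂s) (hdom : R * P < x₂s ^ 2)
    (e : ℝ → ℝ × ℝ × ℝ × ℝ) (hcont : Continuous e)
    (Hd : ℝ × ℝ × ℝ × ℝ → ℝ) (hHdcont : Continuous Hd)
    -- (i): (1/2) C e₂² ≤ H_d(e) for all states
    (hlow : ∀ x : ℝ × ℝ × ℝ × ℝ, (1/2) * C * x.2.1 ^ 2 ≤ Hd x)
    -- (ii): H_d(e(t)) is nonincreasing on any interval where x₂ = x₂* + e₂ > RP/x₂*
    (hmono : ∀ s t : ℝ, 0 ≤ s → s ≤ t →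
      (∀ u ∈ Set.Icc s t, x₂s + (e u).2.1 > R * P / x₂s) → Hd (e t) ≤ Hd (e s))
    (hinit : Real.sqrt ((2 / C) * Hd (e 0)) < x₂s - R * P / x₂s) :
    ∀ t ≥ 0, Real.sqrt ((2 / C) * Hd (e t)) < x₂s - R * P / x₂s := by
  set b : ℝ := x₂s - R * P / x₂s with hbdef
  set φ : ℝ → ℝ := fun t => Real.sqrt ((2 / C) * Hd (e t)) with hφdef
  have hφcont : Continuous φ :=
    (continuous_const.mul (hHdcont.comp hcont)).sqrt
  have hb : 0 < b := by
    have : R * P / x₂s < x₂s := by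
      rw [div_lt_iff₀ hx₂s]
      nlinarith
    simp only [hbdef]
    linarith
  -- key: sublevel implies x₂ condition
  have key : ∀ u : ℝ, φ u < b → x₂s + (e u).2.1 > R * P / x₂s := by
    intro u hu
    have h1 : (e u).2.1 ^ 2 ≤ (2 / C) * Hd (e u) := by
      have h2 : (0:ℝ) ≤ 2 / C := by positivity
      have h3 : (2 / C) * ((1/2) * C * (e u).2.1 ^ 2) ≤ (2 / C) * Hd (e u) :=
        mul_le_mul_of_nonneg_left (hlow (e u)) h2
      calc (e u).2.1 ^ 2 = (2 / C) * ((1/2) * C * (e u).2.1 ^ 2) := by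
            field_simp
        _ ≤ (2 / C) * Hd (e u) := h3
    have habs : |(e u).2.1| ≤ φ u := by
      have := Real.sqrt_le_sqrt h1
      rwa [Real.sqrt_sq_eq_abs] at this
    have : -(e u).2.1 ≤ |(e u).2.1| := neg_le_abs _
    have : -(e u).2.1 < b := lt_of_le_of_lt (this.trans habs) hu
    simp only [hbdef] at this
    linarith
  -- monotonicity consequence via sqrt
  have hsq : ∀ t : ℝ, Hd (e t) ≤ Hd (e 0) → φ t ≤ φ 0 := by
    intro t h
    apply Real.sqrt_le_sqrt
    have : 0 ≤ 2 / C := by positivity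
    exact mul_le_mul_of_nonneg_left h this
  by_contra hcon
  push_neg at hcon
  obtain ⟨T, hT0, hTb⟩ := hcon
  set B : Set ℝ := {t | 0 ≤ t ∧ b ≤ φ t} with hBdef
  have hBne : B.Nonempty := ⟨T, hT0, hTb⟩
  have hBclosed : IsClosed B := by
    have h1 : IsClosed {t : ℝ | 0 ≤ t} := isClosed_le continuous_const continuous_id
    have h2 : IsClosed {t : ℝ | b ≤ φ t} := isClosed_le continuous_const hφcont
    exact h1.inter h2
  have hBbdd : BddBelow B := ⟨0, fun t ht => ht.1⟩
  set t₀ : ℝ := sInf B with ht₀def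
  have ht₀B : t₀ ∈ B := hBclosed.csInf_mem hBne hBbdd
  have ht₀pos : 0 < t₀ := by
    rcases lt_or_eq_of_le ht₀B.1 with h | h
    · exact h
    · exfalso
      have : b ≤ φ 0 := by rw [← h] at ht₀B; exact ht₀B.2
      exact absurd hinit (not_lt.mpr this)
  have hbefore : ∀ s, 0 ≤ s → s < t₀ → φ s < b := by
    intro s hs0 hst
    by_contra h
    push_neg at h
    have : s ∈ B := ⟨hs0, h⟩
    exact absurd (csInf_le hBbdd this) (not_le.mpr hst)
  have hHds : ∀ s, 0 ≤ s → s < t₀ → Hd (e s) ≤ Hd (e 0) := by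
    intro s hs0 hst
    apply hmono 0 s le_rfl hs0
    intro u hu
    exact key u (hbefore u hu.1 (lt_of_le_of_lt hu.2 hst))
  -- take the limit s → t₀⁻
  have hlim : Filter.Tendsto (fun s => Hd (e s)) (nhdsWithin t₀ (Set.Iio t₀)) (nhds (Hd (e t₀))) :=
    ((hHdcont.comp hcont).continuousAt.tendsto).mono_left nhdsWithin_le_nhds
  have hev : ∀ᶠ s in nhdsWithin t₀ (Set.Iio t₀), Hd (e s) ≤ Hd (e 0) := by
    have h1 : ∀ᶠ s in nhdsWithin t₀ (Set.Iio t₀), s ∈ Set.Iio t₀ :=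
      eventually_mem_nhdsWithin
    have h2 : ∀ᶠ s in nhdsWithin t₀ (Set.Iio t₀), 0 < s := by
      apply eventually_nhdsWithin_of_eventually_nhds
      exact eventually_gt_nhds ht₀pos
    filter_upwards [h1, h2] with s hs1 hs2
    exact hHds s hs2.le hs1
  have hne : (nhdsWithin t₀ (Set.Iio t₀)).NeBot := by
    exact nhdsLT_neBot t₀
  have hfin : Hd (e t₀) ≤ Hd (e 0) := le_of_tendsto hlim hev
  have : φ t₀ ≤ φ 0 := hsq t₀ hfin
  have : φ t₀ < b := lt_of_le_of_lt this hinit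
  exact absurd ht₀B.2 (not_le.mpr this)
end

section
/- The largest invariant set of the closed-loop system ė = (J - D)∇H_d contained in {e : Ḣ_d(e) = 0} = {e : D∇H_d(e) = 0} is the singleton {0}, provided: (i) D∇H_d(e) = 0 implies e₁ = e₂ = e₃ = 0; (ii) on the invariant subsystem with e₁ = e₂ = e₃ = 0, the dynamics force x_c = 0 at equilibrium (since ė₁ = 0 requires the controller term αr k(αe₁ - x_c/L₁) = 0, giving x_c = 0). Hence (0,0,0,0) is the only point in the largest invariant set. -/
/-- The largest invariant set of the closed-loop PH system (eq. (13)) contained in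
`{e : Ḣ_d(e) = 0}` (i.e. `e₁ = e₂ = e₃ = 0`) is the singleton `{0}`: any trajectory
of (13) that stays in this set must also have `x_c ≡ 0`. -/
theorem stmt_10 (L₁ C L₂ k α r R P R₂ x₂s : ℝ)
    (hL₁ : 0 < L₁) (hC : 0 < C) (hL₂ : 0 < L₂) (hk : 0 < k) (hα : 0 < α)
    (hr : 0 < r) (hR : 0 < R) (hP : 0 < P) (hR₂ : 0 < R₂) (hx₂s : 0 < x₂s)
    (e₁ e₂ e₃ xc x₂ : ℝ → ℝ)
    (hx₂ : ∀ t, x₂ t = x₂s + e₂ t)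
    (hcond : ∀ t, R * P / (x₂ t * x₂s) < 1)
    -- closed-loop dynamics ė = F ∇H_d, eq. (13)
    (hde₁ : ∀ t, HasDerivAt e₁
      (-(r / L₁^2) * (L₁ * e₁ t + k * α * L₁ * (α * L₁ * e₁ t - xc t))
        - (1 / (C * L₁)) * (C * e₂ t)) t)
    (hde₂ : ∀ t, HasDerivAt e₂
      ((1 / (C * L₁)) * (L₁ * e₁ t + k * α * L₁ * (α * L₁ * e₁ t - xc t))
        + (-(1 / (R * C^2)) + P / (x₂ t * x₂s * C^2)) * (C * e₂ t)
        - (1 / (C * L₂)) * (L₂ * e₃ t)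
        + (α / C) * (-(k * (α * L₁ * e₁ t - xc t)))) t)
    (hde₃ : ∀ t, HasDerivAt e₃
      ((1 / (C * L₂)) * (C * e₂ t) - (R₂ / L₂^2) * (L₂ * e₃ t)) t)
    (hdxc : ∀ t, HasDerivAt xc (-(α / C) * (C * e₂ t)) t)
    -- the trajectory lies in the zero-dissipation set {Ḣ_d = 0}: e₁ = e₂ = e₃ = 0
    (hzero : ∀ t, e₁ t = 0 ∧ e₂ t = 0 ∧ e₃ t = 0) :
    ∀ t, xc t = 0 := by
  intro t
  have he₁ : e₁ = fun _ => 0 := funext fun t => (hzero t).1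
  have h0 : HasDerivAt e₁ 0 t := by rw [he₁]; exact hasDerivAt_const t 0
  have h1 := hde₁ t
  have heq := h1.unique h0
  obtain ⟨h1', h2', h3'⟩ := hzero t
  rw [h1', h2'] at heq
  have hkαL : k * α * L₁ ≠ 0 := by positivity
  have hrL : r / L₁^2 ≠ 0 := by positivity
  field_simp at heq
  have hr' : r ≠ 0 := ne_of_gt hr
  have hk' : k * α * L₁ ≠ 0 := hkαL
  have heq : r * (k * α * L₁ * xc t) = 0 := by linear_combination L₁ * heq
  rcases mul_eq_zero.mp heq with h | h
  · exact absurd h hr'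
  · rcases mul_eq_zero.mp h with h | h
    · exact absurd h hk'
    · exact h
end

section
/- Substituting the control law u = -αrk(αe₁ - x_c/L₁) and ẋ_c = -αe₂ into the open-loop error PH system ė = F₀∇H₁ + (u,0,0)ᵀ yields the closed-loop PH system ė_ext = F∇H_d with extended state (e₁,e₂,e₃,x_c), where ∇H_d = (L₁e₁ + kαL₁(αL₁e₁ - x_c), Ce₂, L₂e₃, -k(αL₁e₁ - x_c))ᵀ and F the matrix in equation (13); in particular the (4,2) and (2,4) entries of F are -α/C and α/C respectively. -/
/-- Substituting the control law `u = -αrk(αe₁ - x_c/L₁)` and `ẋ_c = -αe₂` into the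
open-loop error port-Hamiltonian system yields the closed-loop PH system
`ė_ext = F ∇H_d` with `∇H_d = (L₁e₁ + kαL₁(αL₁e₁ - x_c), Ce₂, L₂e₃, -k(αL₁e₁ - x_c))`,
where the (2,4) entry of `F` is `α/C` and the (4,2) entry is `-α/C`. -/
theorem stmt_12 (L₁ C L₂ k α r R P R₂ x₂s : ℝ)
    (hL₁ : 0 < L₁) (hC : 0 < C) (hL₂ : 0 < L₂) (hk : 0 < k) (hα : 0 < α)
    (hr : 0 < r) (hR : 0 < R) (hP : 0 < P) (hR₂ : 0 < R₂) (hx₂s : 0 < x₂s)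
    (e₁ e₂ e₃ xc x₂ u : ℝ → ℝ)
    -- control law and controller state dynamics
    (hu : ∀ t, u t = -(α * r * k) * (α * e₁ t - xc t / L₁))
    (hxc : ∀ t, HasDerivAt xc (-(α * e₂ t)) t)
    -- open-loop error dynamics ė = F₀ ∇H₁ + (u,0,0)ᵀ
    (hoe₁ : ∀ t, HasDerivAt e₁
      (-(r / L₁^2) * (L₁ * e₁ t) - (1 / (C * L₁)) * (C * e₂ t) + u t) t)
    (hoe₂ : ∀ t, HasDerivAt e₂
      ((1 / (C * L₁)) * (L₁ * e₁ t)
        + (-(1 / (R * C^2)) + P / (x₂ t * x₂s * C^2)) * (C * e₂ t)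
        - (1 / (C * L₂)) * (L₂ * e₃ t)) t)
    (hoe₃ : ∀ t, HasDerivAt e₃
      ((1 / (C * L₂)) * (C * e₂ t) - (R₂ / L₂^2) * (L₂ * e₃ t)) t) :
    -- closed-loop PH form ė_ext = F ∇H_d
    (∀ t, HasDerivAt e₁
      (-(r / L₁^2) * (L₁ * e₁ t + k * α * L₁ * (α * L₁ * e₁ t - xc t))
        - (1 / (C * L₁)) * (C * e₂ t)) t) ∧
    (∀ t, HasDerivAt e₂
      ((1 / (C * L₁)) * (L₁ * e₁ t + k * α * L₁ * (α * L₁ * e₁ t - xc t))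
        + (-(1 / (R * C^2)) + P / (x₂ t * x₂s * C^2)) * (C * e₂ t)
        - (1 / (C * L₂)) * (L₂ * e₃ t)
        + (α / C) * (-(k * (α * L₁ * e₁ t - xc t)))) t) ∧
    (∀ t, HasDerivAt e₃
      ((1 / (C * L₂)) * (C * e₂ t) - (R₂ / L₂^2) * (L₂ * e₃ t)) t) ∧
    (∀ t, HasDerivAt xc (-(α / C) * (C * e₂ t)) t) := by
  have hL₁' := hL₁.ne'
  have hC' := hC.ne'
  refine ⟨fun t => ?_, fun t => ?_, hoe₃, fun t => ?_⟩
  · convert hoe₁ t using 1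
    rw [hu]
    field_simp
    ring
  · convert hoe₂ t using 1
    field_simp
    ring
  · convert hxc t using 1
    field_simp
end

section
/- For the disturbance observer ẑ' = (A - l(x)M)z + (terms), with estimation error ζ̃ = ẑ + p(x)·(scaling) - ζ, the error satisfies the autonomous linear ODE ζ̃' = (A - l(x)M)ζ̃ where l(x) = ∂p/∂x, provided the system dynamics used in the observer match the true dynamics exactly (d generated by ζ' = Aζ, d = Mζ). -/
open Matrix
/-- Scalar-state disturbance observer: the estimation error
`ζ̃ = (z + L·p(x)) - ζ` satisfies the autonomous linear ODE
`ζ̃' = (A - l(x)·M) ζ̃`, i.e. `ζ̃' = A ζ̃ - (M ⬝ᵥ ζ̃) • l(x)`. -/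
theorem stmt_16 (m : ℕ) (L : ℝ) (hL : 0 < L)
    (A : Matrix (Fin m) (Fin m) ℝ) (Mv : Fin m → ℝ)
    (g : ℝ → ℝ → ℝ)
    (x : ℝ → ℝ) (ζ z : ℝ → (Fin m → ℝ))
    (p l : ℝ → (Fin m → ℝ))
    (hp : ∀ y, HasDerivAt p (l y) y)
    -- exogenous disturbance system: ζ' = Aζ, d = M ζ
    (hζ : ∀ t, HasDerivAt ζ (A.mulVec (ζ t)) t)
    -- true dynamics: L·x' = g(x,t) + d
    (hx : ∀ t, HasDerivAt x ((g (x t) t + Mv ⬝ᵥ ζ t) / L) t)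
    -- observer internal state: z' = (A - l(x)M)z + A·L·p(x) - l(x)(M·L·p(x) + g(x,t))
    (hz : ∀ t, HasDerivAt z
      (A.mulVec (z t + L • p (x t))
        - (Mv ⬝ᵥ (z t + L • p (x t)) + g (x t) t) • l (x t)) t) :
    ∀ t, HasDerivAt (fun s => (z s + L • p (x s)) - ζ s)
      (A.mulVec ((z t + L • p (x t)) - ζ t)
        - (Mv ⬝ᵥ ((z t + L • p (x t)) - ζ t)) • l (x t)) t := by
  intro t
  have hpx : HasDerivAt (fun s => p (x s)) (((g (x t) t + Mv ⬝ᵥ ζ t) / L) • l (x t)) t :=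
    (hp (x t)).scomp t (hx t)
  have h := ((hz t).add (hpx.const_smul L)).sub (hζ t)
  convert h using 1
  case e'_4 => rfl
  case e'_5 => rfl
  case e'_6 => rfl
  case e'_8 => rfl
  have hL' : L ≠ 0 := ne_of_gt hL
  rw [smul_smul, mul_div_cancel₀ _ hL']
  simp only [mulVec_sub, mulVec_add, dotProduct_sub, dotProduct_add, sub_smul, add_smul]
  module
end

section
/- For the simplified practical case (power line and parasitic resistance neglected, disturbance d₁ = E constant), the observer d̂₁ = z₁ + L₁ηx₁ with ż₁ = ηx₂ - ημd̂₁ (where the true dynamics are L₁x₁' = μE - x₂, η > 0, and μ(t) > 0 bounded below by μ_min > 0) yields an estimation error ẽ = d̂₁ - E satisfying ẽ' = -ημẽ, hence |ẽ(t)| ≤ |ẽ(0)|e^{-ημ_min t} → 0. -/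
theorem stmt_17 (E L₁ η μmin : ℝ) (hE : 0 < E) (hL₁ : 0 < L₁) (hη : 0 < η)
    (hμmin : 0 < μmin)
    (x₁ x₂ μ z : ℝ → ℝ)
    (hμ : ∀ t, μmin ≤ μ t ∧ μ t ≤ 1)
    -- simplified dynamics L₁ x₁' = μE - x₂
    (hx₁ : ∀ t, HasDerivAt x₁ ((μ t * E - x₂ t) / L₁) t)
    -- observer: d̂₁ = z + L₁ η x₁, z' = η x₂ - η μ d̂₁
    (hz : ∀ t, HasDerivAt z (η * x₂ t - η * μ t * (z t + L₁ * η * x₁ t)) t) :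
    (∀ t, HasDerivAt (fun s => (z s + L₁ * η * x₁ s) - E)
      (-(η * μ t) * ((z t + L₁ * η * x₁ t) - E)) t) ∧
    (∀ t ≥ 0, |(z t + L₁ * η * x₁ t) - E| ≤
      |(z 0 + L₁ * η * x₁ 0) - E| * Real.exp (-(η * μmin) * t)) ∧
    Filter.Tendsto (fun t => (z t + L₁ * η * x₁ t) - E) Filter.atTop (nhds 0) := by
  set f : ℝ → ℝ := fun s => (z s + L₁ * η * x₁ s) - E with hf
  have hf' : ∀ t, HasDerivAt f (-(η * μ t) * f t) t := by
    intro t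
    have h1 := (hz t).add (((hx₁ t).const_mul (L₁ * η)))
    have h2 := h1.sub_const E
    refine h2.congr_deriv ?_
    rw [hf]
    field_simp
    ring
  -- decay bound via g t = (f t)^2 * exp(2 η μmin t)
  set g : ℝ → ℝ := fun t => (f t)^2 * Real.exp (2 * (η * μmin) * t) with hg
  have hgd : ∀ t, HasDerivAt g
      ((2 * f t * (-(η * μ t) * f t)) * Real.exp (2 * (η * μmin) * t)
        + (f t)^2 * (2 * (η * μmin) * Real.exp (2 * (η * μmin) * t))) t := by
    intro t
    have h1 : HasDerivAt (fun s => (f s)^2) (2 * f t * (-(η * μ t) * f t)) t := by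
      have := (hf' t).pow 2
      refine this.congr_deriv ?_
      rw [show (2:ℕ) - 1 = 1 from rfl, pow_one]
      push_cast
      ring
    have h2 : HasDerivAt (fun s => Real.exp (2 * (η * μmin) * s))
        (2 * (η * μmin) * Real.exp (2 * (η * μmin) * t)) t := by
      have := ((hasDerivAt_id t).const_mul (2 * (η * μmin))).exp
      simpa [mul_comm] using this
    exact h1.mul h2
  have hgdiff : Differentiable ℝ g := fun t => (hgd t).differentiableAt
  have hgderiv : ∀ t, deriv g t ≤ 0 := by
    intro t
    rw [(hgd t).deriv]
    have hexp : 0 < Real.exp (2 * (η * μmin) * t) := Real.exp_pos _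
    have hμt := (hμ t).1
    have heq : (2 * f t * (-(η * μ t) * f t)) * Real.exp (2 * (η * μmin) * t)
        + (f t)^2 * (2 * (η * μmin) * Real.exp (2 * (η * μmin) * t))
        = 2 * (f t)^2 * Real.exp (2 * (η * μmin) * t) * (η * μmin - η * μ t) := by ring
    rw [heq]
    apply mul_nonpos_of_nonneg_of_nonpos
    · positivity
    · nlinarith [sq_nonneg (f t)]
  have hanti : Antitone g := antitone_of_deriv_nonpos hgdiff hgderiv
  have hbd : ∀ t ≥ 0, |f t| ≤ |f 0| * Real.exp (-(η * μmin) * t) := by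
    intro t ht
    have hg0 : g t ≤ g 0 := hanti ht
    have hexp : 0 < Real.exp (2 * (η * μmin) * t) := Real.exp_pos _
    rw [hg] at hg0
    simp only [mul_zero, Real.exp_zero, mul_one] at hg0
    have key : (f t)^2 ≤ (|f 0| * Real.exp (-(η * μmin) * t))^2 := by
      have hrhs : (|f 0| * Real.exp (-(η * μmin) * t))^2
          = (f 0)^2 / Real.exp (2 * (η * μmin) * t) := by
        rw [mul_pow, sq_abs, sq (Real.exp _), ← Real.exp_add, div_eq_mul_inv,
          ← Real.exp_neg]
        congr 1
        ring
      rw [hrhs, le_div_iff₀ hexp]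
      exact hg0
    have hnn : 0 ≤ |f 0| * Real.exp (-(η * μmin) * t) := by positivity
    nlinarith [abs_nonneg (f t), sq_abs (f t)]
  refine ⟨hf', hbd, ?_⟩
  have hB : Filter.Tendsto (fun t => |f 0| * Real.exp (-(η * μmin) * t))
      Filter.atTop (nhds 0) := by
    have h1 : Filter.Tendsto (fun t : ℝ => -(η * μmin) * t) Filter.atTop Filter.atBot := by
      apply Filter.Tendsto.const_mul_atTop_of_neg
      · linarith [mul_pos hη hμmin]
      · exact Filter.tendsto_id
    have h2 := Real.tendsto_exp_atBot.comp h1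
    have := h2.const_mul (|f 0|)
    simpa using this
  apply squeeze_zero_norm' _ hB
  filter_upwards [Filter.eventually_ge_atTop (0:ℝ)] with t ht
  simpa using hbd t ht
end
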